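/- Let T be a rooted hypertree with root γ whose vertices carry distinct positive weights, W_γ being the weight of γ. Then the bonus function satisfies S_T(γ) = W_γ if γ ∈ I(T), and S_T(γ) = 0 otherwise; that is, S_T(γ) = W_γ·1[γ ∈ I(T)]. -/

import Mathlib

open Finset

/-- A vertex `v` is selected by the greedy algorithm (largest weight first) run on the
hypergraph with edge set `E` and weights `w`: `v` is selected iff there is no edge `e`
containing `v` all of whose other vertices have larger weight and are themselves selected. -/
def greedySelect {V : Type*} [Fintype V] [DecidableEq V]
    (E : Finset (Finset V)) (w : V → ℝ) (v : V) : Prop :=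
  ¬ ∃ e ∈ E, v ∈ e ∧ (∀ u ∈ e, u ≠ v → w v < w u) ∧
      (∀ u ∈ e, u ≠ v → w v < w u → greedySelect E w u)
termination_by (Finset.univ.filter (fun u => w v < w u)).card
decreasing_by
  rename_i hvu
  apply Finset.card_lt_card
  constructor
  · intro x hx
    simp only [Finset.mem_filter, Finset.mem_univ, true_and] at *
    linarith
  · intro hsub
    have hmem : u ∈ Finset.univ.filter (fun x => w v < w x) := by
      simp only [Finset.mem_filter, Finset.mem_univ, true_and]; exact hvu
    have := hsub hmem
    simp only [Finset.mem_filter, Finset.mem_univ, true_and] at this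
    exact lt_irrefl _ this

open scoped Classical in
/-- The independent set produced by the greedy algorithm. -/
noncomputable def greedySet {V : Type*} [Fintype V] [DecidableEq V]
    (E : Finset (Finset V)) (w : V → ℝ) : Finset V :=
  Finset.univ.filter (fun v => greedySelect E w v)


/-- The descending edges of a vertex `v` in a depth-labelled hypergraph: the edges
containing `v` in which `v` is the (unique) vertex closest to the root. -/
def DescEdges {V : Type*} [DecidableEq V]
    (E : Finset (Finset V)) (dep : V → ℕ) (v : V) : Finset (Finset V) :=
  E.filter (fun e => v ∈ e ∧ ∀ u ∈ e, dep v ≤ dep u)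

/-- `(V, E)` together with the root `γ` and depth function `dep` is a rooted hypertree:
the root is the unique vertex of depth `0`; every edge consists of a unique vertex
closest to the root together with vertices one level deeper; and every non-root vertex
lies in exactly one edge in which it is not the vertex closest to the root. -/
def IsRootedHypertree {V : Type*} [Fintype V] [DecidableEq V]
    (E : Finset (Finset V)) (γ : V) (dep : V → ℕ) : Prop :=
  dep γ = 0 ∧ (∀ v, dep v = 0 → v = γ) ∧
  (∀ e ∈ E, ∃ t ∈ e, ∀ u ∈ e, u ≠ t → dep u = dep t + 1) ∧
  (∀ v : V, v ≠ γ → (E.filter (fun e => v ∈ e ∧ ∃ u ∈ e, dep u < dep v)).card = 1)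

open scoped Classical in
theorem bonus_function_at_root
    (V : Type) [Fintype V] [DecidableEq V]
    (E : Finset (Finset V)) (γ : V) (dep : V → ℕ)
    (htree : IsRootedHypertree E γ dep)
    (w : V → ℝ) (hw : Function.Injective w) (hpos : ∀ v, 0 < w v)
    (S : V → ℝ)
    (hS : ∀ v : V, S v = w v * ∏ e ∈ DescEdges E dep v,
      (if ∃ u ∈ e, u ≠ v ∧ S u < w v then (1 : ℝ) else 0)) :
    S γ = w γ * (if γ ∈ greedySet E w then (1 : ℝ) else 0) := by
  obtain ⟨hdγ, huniq, hedge, hup⟩ := htree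
  -- S takes values in {0, w v}
  have hSrange : ∀ v, S v = 0 ∨ S v = w v := by
    intro v
    rw [hS v]
    by_cases h : ∀ f ∈ DescEdges E dep v,
        (if ∃ u ∈ f, u ≠ v ∧ S u < w v then (1 : ℝ) else 0) = 1
    · right; rw [Finset.prod_eq_one h, mul_one]
    · push_neg at h
      obtain ⟨f, hf, hf1⟩ := h
      left
      have hcond : ¬ ∃ u ∈ f, u ≠ v ∧ S u < w v := fun hc => hf1 (if_pos hc)
      have hz : (if ∃ u ∈ f, u ≠ v ∧ S u < w v then (1 : ℝ) else 0) = 0 := if_neg hcond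
      rw [Finset.prod_eq_zero hf hz, mul_zero]
  -- in a descending edge of v, every other vertex has depth dep v + 1
  have hdescdep : ∀ v, ∀ f ∈ DescEdges E dep v, ∀ u ∈ f, u ≠ v → dep u = dep v + 1 := by
    intro v f hf u hu hne
    simp only [DescEdges, Finset.mem_filter] at hf
    obtain ⟨hfE, hvf, hmin⟩ := hf
    obtain ⟨t, ht, htdep⟩ := hedge f hfE
    have htv : t = v := by
      by_contra htv
      have h1 := htdep v hvf (fun h => htv h.symm)
      have h2 := hmin t ht
      omega
    subst htv
    exact htdep u hu hne
  -- uniqueness of the "up-edge": if f is a descending edge of v and x ∈ f, x ≠ v,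
  -- then any edge e' containing x with a vertex of smaller depth equals f
  have hupuniq : ∀ v, ∀ f ∈ DescEdges E dep v, ∀ x ∈ f, x ≠ v →
      ∀ e' ∈ E, x ∈ e' → (∃ u ∈ e', dep u < dep x) → e' = f := by
    intro v f hf x hx hne e' he' hxe' hlow
    have hdx : dep x = dep v + 1 := hdescdep v f hf x hx hne
    have hxγ : x ≠ γ := by
      intro h; subst h; omega
    have hcard := hup x hxγ
    rw [Finset.card_eq_one] at hcard
    obtain ⟨a, ha⟩ := hcard
    have hfmem : f ∈ E.filter (fun e => x ∈ e ∧ ∃ u ∈ e, dep u < dep x) := by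
      simp only [DescEdges, Finset.mem_filter] at hf
      simp only [Finset.mem_filter]
      exact ⟨hf.1, hx, v, hf.2.1, by omega⟩
    have he'mem : e' ∈ E.filter (fun e => x ∈ e ∧ ∃ u ∈ e, dep u < dep x) := by
      simp only [Finset.mem_filter]
      exact ⟨he', hxe', hlow⟩
    rw [ha, Finset.mem_singleton] at hfmem he'mem
    rw [hfmem, he'mem]
  -- classification of edges containing v
  have hclass : ∀ v, ∀ e ∈ E, v ∈ e →
      e ∈ DescEdges E dep v ∨ (∃ u ∈ e, dep u < dep v) := by
    intro v e he hve
    obtain ⟨t, ht, htdep⟩ := hedge e he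
    by_cases htv : t = v
    · left
      simp only [DescEdges, Finset.mem_filter]
      refine ⟨he, hve, ?_⟩
      intro u hu
      rcases eq_or_ne u t with huv | huv
      · rw [huv, htv]
      · have h1 := htdep u hu huv
        have h2 : dep t = dep v := by rw [htv]
        omega
    · right
      exact ⟨t, ht, by have := htdep v hve (fun h => htv h.symm); omega⟩
  -- measure decrease
  have hcard : ∀ v u : V, w v < w u →
      (Finset.univ.filter fun x => w u < w x).card <
      (Finset.univ.filter fun x => w v < w x).card := by
    intro v u hvu
    apply Finset.card_lt_card
    constructor
    · intro x hx
      simp only [Finset.mem_filter, Finset.mem_univ, true_and] at *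
      linarith
    · intro hsub
      have hmem : u ∈ Finset.univ.filter (fun x => w v < w x) := by
        simp only [Finset.mem_filter, Finset.mem_univ, true_and]; exact hvu
      have := hsub hmem
      simp only [Finset.mem_filter, Finset.mem_univ, true_and] at this
      exact lt_irrefl _ this
  -- main claim by strong induction on the number of heavier vertices
  have main : ∀ n : ℕ, ∀ v : V, (Finset.univ.filter fun x => w v < w x).card < n →
      (greedySelect E w v ↔ (S v = w v ∧
        ¬ ∃ e ∈ E, v ∈ e ∧ (∃ u ∈ e, dep u < dep v) ∧
          ∀ u ∈ e, u ≠ v → w v < w u ∧ greedySelect E w u)) := by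
    intro n
    induction n with
    | zero => intro v hv; omega
    | succ n ih =>
      intro v hv
      have hvn : (Finset.univ.filter fun x => w v < w x).card ≤ n := by omega
      have IH : ∀ u : V, w v < w u →
          (greedySelect E w u ↔ (S u = w u ∧
            ¬ ∃ e ∈ E, u ∈ e ∧ (∃ x ∈ e, dep x < dep u) ∧
              ∀ x ∈ e, x ≠ u → w u < w x ∧ greedySelect E w x)) := by
        intro u hu
        exact ih u (lt_of_lt_of_le (hcard v u hu) hvn)
      rw [greedySelect]
      constructor
      · intro hsel
        constructor
        · -- S v = w v
          rw [hS v]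
          have hall : ∀ f ∈ DescEdges E dep v,
              (if ∃ u ∈ f, u ≠ v ∧ S u < w v then (1 : ℝ) else 0) = 1 := by
            intro f hf
            rw [if_pos]
            by_contra hno
            push_neg at hno
            have hf' := hf
            simp only [DescEdges, Finset.mem_filter] at hf'
            have hfE : f ∈ E := hf'.1
            have hvf : v ∈ f := hf'.2.1
            apply hsel
            refine ⟨f, hfE, hvf, ?_, ?_⟩
            · intro u hu hne
              have h1 := hno u hu hne
              rcases hSrange u with h2 | h2
              · exact absurd (h2 ▸ hpos v) (by rw [h2] at h1; linarith)
              · rw [h2] at h1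
                rcases lt_or_eq_of_le h1 with h | h
                · exact h
                · exact absurd (hw h) (Ne.symm hne ∘ id)
            · intro u hu hne hwvu
              rw [IH u hwvu]
              constructor
              · have h1 := hno u hu hne
                rcases hSrange u with h2 | h2
                · rw [h2] at h1; linarith [hpos v]
                · exact h2
              · rintro ⟨e', he', hue', hlow, hkill⟩
                have := hupuniq v f hf u hu hne e' he' hue' hlow
                subst this
                have := hkill v hvf (Ne.symm hne)
                linarith [this.1]
          rw [Finset.prod_eq_one hall, mul_one]
        · -- no up-kill
          rintro ⟨e, he, hve, _, hkill⟩
          apply hsel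
          exact ⟨e, he, hve, fun u hu hne => (hkill u hu hne).1,
            fun u hu hne _ => (hkill u hu hne).2⟩
      · rintro ⟨hSv, hnup⟩
        rintro ⟨e, he, hve, hbig, hselall⟩
        rcases hclass v e he hve with hdescE | hlow
        · -- e is a descending edge: then the factor of e in S v is 0, contradiction
          have hfac : (if ∃ u ∈ e, u ≠ v ∧ S u < w v then (1 : ℝ) else 0) = 0 := by
            rw [if_neg]
            rintro ⟨u, hu, hne, hlt⟩
            have hwvu := hbig u hu hne
            have hselu := hselall u hu hne hwvu
            have hSu : S u = w u := ((IH u hwvu).1 hselu).1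
            rw [hSu] at hlt
            linarith
          have : S v = 0 := by
            rw [hS v, Finset.prod_eq_zero hdescE hfac, mul_zero]
          rw [this] at hSv
          exact absurd hSv.symm (ne_of_gt (hpos v))
        · exact hnup ⟨e, he, hve, hlow, fun u hu hne =>
            ⟨hbig u hu hne, hselall u hu hne (hbig u hu hne)⟩⟩
  have mainγ := main ((Finset.univ.filter fun x => w γ < w x).card + 1) γ (Nat.lt_succ_self _)
  have hnoup : ¬ ∃ e ∈ E, γ ∈ e ∧ (∃ u ∈ e, dep u < dep γ) ∧
      ∀ u ∈ e, u ≠ γ → w γ < w u ∧ greedySelect E w u := by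
    rintro ⟨e, _, _, ⟨u, _, hu⟩, _⟩
    omega
  have hiff : greedySelect E w γ ↔ S γ = w γ := by
    rw [mainγ]
    exact ⟨fun h => h.1, fun h => ⟨h, hnoup⟩⟩
  have hmem : γ ∈ greedySet E w ↔ greedySelect E w γ := by
    simp [greedySet]
  by_cases hsel : greedySelect E w γ
  · rw [if_pos (hmem.2 hsel), mul_one]
    exact hiff.1 hsel
  · rw [if_neg (fun h => hsel (hmem.1 h)), mul_zero]
    rcases hSrange γ with h | h
    · exact h
    · exact absurd (hiff.2 h) hsel
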